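/- Let σ² > 0 and c > 0, and define φ(v) = v(1 − σ²c/(σ² − v)) for real v ≠ σ², w⁻ = σ²(1 − √c), w⁺ = σ²(1 + √c), x⁻ = σ²(1 − √c)², x⁺ = σ²(1 + √c)². Then φ is strictly increasing on (−∞, w⁻) and on (w⁺, +∞), strictly decreasing on (w⁻, σ²) and on (σ², w⁺), and φ(w⁻) = x⁻ and φ(w⁺) = x⁺. -/

import Mathlib

lemma phi_hasDerivAt (s c v : ℝ) (hv : v ≠ s) :
    HasDerivAt (fun v : ℝ => v * (1 - s * c / (s - v)))
      (1 - s ^ 2 * c / (s - v) ^ 2) v := by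
  have hne : s - v ≠ 0 := sub_ne_zero.mpr (Ne.symm hv)
  have h1 : HasDerivAt (fun v : ℝ => s - v) (-1) v := by
    simpa using (hasDerivAt_id v).const_sub s
  have h2 : HasDerivAt (fun v : ℝ => s * c / (s - v))
      ((0 * (s - v) - s * c * (-1)) / (s - v) ^ 2) v :=
    (hasDerivAt_const v (s * c)).div h1 hne
  have h3 := ((h2.const_sub 1)).const_mul (1 : ℝ)
  have h4 := (hasDerivAt_id v).mul (h2.const_sub 1)
  refine h4.congr_deriv ?_
  simp only [id_eq]
  field_simp
  ring

theorem phi_monotonicity (s c : ℝ) (hs : 0 < s) (hc : 0 < c) :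
    StrictMonoOn (fun v : ℝ => v * (1 - s * c / (s - v))) (Set.Iio (s * (1 - Real.sqrt c))) ∧
    StrictMonoOn (fun v : ℝ => v * (1 - s * c / (s - v))) (Set.Ioi (s * (1 + Real.sqrt c))) ∧
    StrictAntiOn (fun v : ℝ => v * (1 - s * c / (s - v))) (Set.Ioo (s * (1 - Real.sqrt c)) s) ∧
    StrictAntiOn (fun v : ℝ => v * (1 - s * c / (s - v))) (Set.Ioo s (s * (1 + Real.sqrt c))) ∧
    (s * (1 - Real.sqrt c)) * (1 - s * c / (s - s * (1 - Real.sqrt c)))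
      = s * (1 - Real.sqrt c) ^ 2 ∧
    (s * (1 + Real.sqrt c)) * (1 - s * c / (s - s * (1 + Real.sqrt c)))
      = s * (1 + Real.sqrt c) ^ 2 := by
  set r := Real.sqrt c with hr
  have hrpos : 0 < r := Real.sqrt_pos.mpr hc
  have hr2 : r ^ 2 = c := Real.sq_sqrt hc.le
  set f : ℝ → ℝ := fun v => v * (1 - s * c / (s - v)) with hf
  have hderiv : ∀ v : ℝ, v ≠ s → deriv f v = 1 - s ^ 2 * c / (s - v) ^ 2 :=
    fun v hv => (phi_hasDerivAt s c v hv).deriv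
  have hcont : ∀ v : ℝ, v ≠ s → ContinuousWithinAt f (Set.univ) v := fun v hv =>
    (phi_hasDerivAt s c v hv).continuousAt.continuousWithinAt
  -- sign of derivative
  have hpos : ∀ v : ℝ, s ^ 2 * c < (s - v) ^ 2 → 0 < deriv f v := by
    intro v hv
    have hvne : v ≠ s := by
      intro h; rw [h] at hv; simp at hv; nlinarith
    rw [hderiv v hvne]
    have h0 : (0:ℝ) < (s - v) ^ 2 := by nlinarith
    have := (div_lt_one h0).mpr hv
    linarith
  have hneg : ∀ v : ℝ, v ≠ s → (s - v) ^ 2 < s ^ 2 * c → deriv f v < 0 := by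
    intro v hvne hv
    rw [hderiv v hvne]
    have h0 : (0:ℝ) < (s - v) ^ 2 := by
      have : s - v ≠ 0 := sub_ne_zero.mpr (Ne.symm hvne)
      positivity
    have := (one_lt_div h0).mpr hv
    linarith
  refine ⟨?_, ?_, ?_, ?_, ?_, ?_⟩
  · apply strictMonoOn_of_deriv_pos (convex_Iio _)
    · intro v hv
      have : v < s := by
        have : v < s * (1 - r) := hv
        nlinarith
      exact (hcont v this.ne).mono (Set.subset_univ _)
    · intro v hv
      rw [interior_Iio] at hv
      apply hpos
      have h3 : s * r < s - v := by nlinarith [hv.out]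
      have h4 := pow_lt_pow_left₀ h3 (mul_pos hs hrpos).le two_ne_zero
      have heq : s ^ 2 * c = (s * r) ^ 2 := by rw [mul_pow, hr2]
      linarith
  · apply strictMonoOn_of_deriv_pos (convex_Ioi _)
    · intro v hv
      have : s < v := by
        have : s * (1 + r) < v := hv
        nlinarith
      exact (hcont v this.ne').mono (Set.subset_univ _)
    · intro v hv
      rw [interior_Ioi] at hv
      apply hpos
      have h3 : s * r < v - s := by nlinarith [hv.out]
      have h4 := pow_lt_pow_left₀ h3 (mul_pos hs hrpos).le two_ne_zero
      have heq : s ^ 2 * c = (s * r) ^ 2 := by rw [mul_pow, hr2]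
      have h5 : (s - v) ^ 2 = (v - s) ^ 2 := by ring
      linarith
  · apply strictAntiOn_of_deriv_neg (convex_Ioo _ _)
    · intro v hv
      exact (hcont v hv.2.ne).mono (Set.subset_univ _)
    · intro v hv
      rw [interior_Ioo] at hv
      obtain ⟨h1, h2⟩ := hv
      exact hneg v h2.ne (by nlinarith)
  · apply strictAntiOn_of_deriv_neg (convex_Ioo _ _)
    · intro v hv
      exact (hcont v hv.1.ne').mono (Set.subset_univ _)
    · intro v hv
      rw [interior_Ioo] at hv
      obtain ⟨h1, h2⟩ := hv
      exact hneg v h1.ne' (by nlinarith)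
  · have h1 : s - s * (1 - r) = s * r := by ring
    rw [h1]
    have h2 : s * r ≠ 0 := by positivity
    field_simp
    linear_combination (1 - r) * hr2
  · have h1 : s - s * (1 + r) = -(s * r) := by ring
    rw [h1]
    have h2 : s * r ≠ 0 := by positivity
    field_simp
    linear_combination -1 * hr2
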